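/- Let x and y be histories with x ⊥_ω y and ω x. Then ω(x ⊎ y) holds and last_stamp(x ⊎ y) = last_stamp x; consequently, there is no timestamp t with t ≥ last_stamp(x ⊎ y) and (x ⊎ y)(t) = U. -/

import Mathlib

/-- The two operations recorded in lock histories. -/
inductive LU | L | U deriving DecidableEq

/-- A history: a finite map from positive timestamps to `{L, U}`. -/
abbrev Hist := Finmap (fun _ : ℕ+ => LU)

/-- `last_stamp h = max ({0} ∪ dom h)`. -/
noncomputable def lastStamp (h : Hist) : ℕ := h.keys.sup (fun t => (t : ℕ))

/-- `last_op h` is `h (last_stamp h)` if `last_stamp h ≠ 0`, and `U` otherwise. -/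
noncomputable def lastOp (h : Hist) : LU :=
  if hpos : 0 < lastStamp h then (h.lookup ⟨lastStamp h, hpos⟩).getD LU.U else LU.U

/-- `ω h` holds iff the last operation of `h` is a lock. -/
noncomputable def omega (h : Hist) : Prop := lastOp h = LU.L

/-- `fresh h = 1 + last_stamp h`, as a positive timestamp. -/
noncomputable def freshStamp (h : Hist) : ℕ+ := ⟨lastStamp h + 1, Nat.succ_pos _⟩

/-- `x ⊥_ω y`. -/
noncomputable def sepOmega (x y : Hist) : Prop :=
  (omega x → lastStamp y < lastStamp x) ∧
  (omega y → lastStamp x < lastStamp y) ∧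
  x.Disjoint y

lemma le_lastStamp_of_mem {h : Hist} {t : ℕ+} (ht : t ∈ h) : (t : ℕ) ≤ lastStamp h :=
  Finset.le_sup (Finmap.mem_keys.mpr ht)

lemma lastStamp_pos_of_omega {h : Hist} (hh : omega h) : 0 < lastStamp h := by
  by_contra hc
  simp [omega, lastOp, hc] at hh

lemma mem_lastStamp_of_omega {h : Hist} (hh : omega h) :
    (⟨lastStamp h, lastStamp_pos_of_omega hh⟩ : ℕ+) ∈ h := by
  have hpos := lastStamp_pos_of_omega hh
  have hne : h.keys.Nonempty := by
    by_contra hc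
    rw [Finset.not_nonempty_iff_eq_empty] at hc
    simp [lastStamp, hc] at hpos
  obtain ⟨b, hb, hbe⟩ := Finset.exists_mem_eq_sup h.keys hne (fun t => (t : ℕ))
  have : (⟨lastStamp h, hpos⟩ : ℕ+) = b := by
    ext
    exact hbe
  rw [this]
  exact Finmap.mem_keys.mp hb

lemma lookup_lastStamp_of_omega {h : Hist} (hh : omega h) :
    h.lookup ⟨lastStamp h, lastStamp_pos_of_omega hh⟩ = some LU.L := by
  have hpos := lastStamp_pos_of_omega hh
  have hmem := mem_lastStamp_of_omega hh
  unfold omega lastOp at hh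
  rw [dif_pos hpos] at hh
  cases hl : h.lookup ⟨lastStamp h, hpos⟩ with
  | none => rw [hl] at hh; exact absurd hh (by simp [Option.getD])
  | some v => rw [hl] at hh; simp [Option.getD] at hh; rw [hh]

theorem sepOmega_union_omega (x y : Hist) (hxy : sepOmega x y) (hx : omega x) :
    omega (x ∪ y) ∧ lastStamp (x ∪ y) = lastStamp x ∧
    ∀ t : ℕ+, lastStamp (x ∪ y) ≤ (t : ℕ) → (x ∪ y).lookup t ≠ some LU.U := by
  obtain ⟨h1, h2, hdisj⟩ := hxy
  have hyx := h1 hx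
  have hpos := lastStamp_pos_of_omega hx
  have hstamp : lastStamp (x ∪ y) = lastStamp x := by
    apply le_antisymm
    · apply Finset.sup_le
      intro t ht
      rw [Finmap.keys_union, Finset.mem_union] at ht
      rcases ht with ht | ht
      · exact Finset.le_sup ht
      · exact le_of_lt (lt_of_le_of_lt (Finset.le_sup ht) hyx)
    · exact le_lastStamp_of_mem (Finmap.mem_union.mpr (Or.inl (mem_lastStamp_of_omega hx)))
  have hlookup : (x ∪ y).lookup ⟨lastStamp x, hpos⟩ = some LU.L := by
    refine (Finmap.lookup_union_left (mem_lastStamp_of_omega hx)).trans ?_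
    exact lookup_lastStamp_of_omega hx
  have homega : omega (x ∪ y) := by
    unfold omega lastOp
    rw [dif_pos (hstamp ▸ hpos)]
    have : (⟨lastStamp (x ∪ y), hstamp ▸ hpos⟩ : ℕ+) = ⟨lastStamp x, hpos⟩ := by
      ext; exact hstamp
    rw [this, hlookup]
    rfl
  refine ⟨homega, hstamp, ?_⟩
  intro t ht hU
  have htmem : t ∈ x ∪ y := Finmap.lookup_isSome.mp (by simp [hU])
  have hle : (t : ℕ) ≤ lastStamp (x ∪ y) := le_lastStamp_of_mem htmem
  have : t = (⟨lastStamp x, hpos⟩ : ℕ+) := by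
    apply PNat.coe_injective
    simpa [hstamp] using le_antisymm hle ht
  rw [this, hlookup] at hU
  exact LU.noConfusion (Option.some.inj hU)
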